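/- Equivalence of exact state merging of a tripartite pure state, of the corresponding maximally entangled state, and of the corresponding set of bipartite states (Proposition 3.1 of the paper). Let d_R, d_A, d_B, K, L be positive integers and let |ψ⟩ ∈ ℂ^{d_R}⊗ℂ^{d_A}⊗ℂ^{d_B} be a unit vector with Schmidt decomposition |ψ⟩ = Σ_{l=0}^{D−1} √λ_l |l⟩⊗|ψ_l⟩ across the bipartition between the first factor and the remaining two, where D is the Schmidt rank, λ_l > 0, {|l⟩} are orthonormal in ℂ^{d_R} and {|ψ_l⟩} are orthonormal in ℂ^{d_A}⊗ℂ^{d_B}. Define the corresponding maximally entangled state |Φ_D⁺(ψ)⟩ := Σ_{l=0}^{D−1} (1/√D) |l⟩⊗|ψ_l⟩. Let M be any ℂ-linear map from matrices on ℂ^{d_A}⊗ℂ^{d_B}⊗ℂ^K⊗ℂ^K to matrices on ℂ^{d_{B′}}⊗ℂ^{d_B}⊗ℂ^L⊗ℂ^L, where d_{B′} = d_A, and let |ψ_l⟩^{B′B} denote |ψ_l⟩ with the ℂ^{d_A} factor relabelled as ℂ^{d_{B′}}. Then the following are equivalent: (1) (id_R ⊗ M)( |ψ⟩⟨ψ|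 ⊗ |Φ_K⁺⟩⟨Φ_K⁺| ) = |ψ′⟩⟨ψ′| ⊗ |Φ_L⁺⟩⟨Φ_L⁺|, where |ψ′⟩ = Σ_l √λ_l |l⟩⊗|ψ_l⟩^{B′B}; (2) (id_R ⊗ M)( |Φ_D⁺(ψ)⟩⟨Φ_D⁺(ψ)| ⊗ |Φ_K⁺⟩⟨Φ_K⁺| ) = |Φ_D⁺(ψ)′⟩⟨Φ_D⁺(ψ)′| ⊗ |Φ_L⁺⟩⟨Φ_L⁺|, where |Φ_D⁺(ψ)′⟩ = Σ_l (1/√D)|l⟩⊗|ψ_l⟩^{B′B}; (3) for every density matrix ρ of the form ρ = Σ_{l,l′=0}^{D−1} α_{l,l′} |ψ_l⟩⟨ψ_{l′}| it holds that M( ρ ⊗ |Φ_K⁺⟩⟨Φ_K⁺| ) = ρ′ ⊗ |Φ_L⁺⟩⟨Φ_L⁺|, where ρ′ = Σ_{l,l′} α_{l,l′} |ψ_l⟩^{B′B}⟨ψ_{l′}|^{B′B}. -/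

import Mathlib

open Matrix Kronecker ComplexOrder

noncomputable section

/-- `id_R ⊗ M` for a map `M` on matrices: the reference system (first factor) is untouched. -/
def idTen {dR : ℕ} {γ γ' : Type*}
    (M : Matrix γ γ ℂ → Matrix γ' γ' ℂ)
    (ρ : Matrix (Fin dR × γ) (Fin dR × γ) ℂ) :
    Matrix (Fin dR × γ') (Fin dR × γ') ℂ :=
  Matrix.of fun p q => M (Matrix.of fun x y => ρ (p.1, x) (q.1, y)) p.2 q.2

/-- The maximally entangled state `|Φ_K⁺⟩ = (1/√K) Σ_l |l⟩⊗|l⟩`. -/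
def phiP (K : ℕ) : Fin K × Fin K → ℂ :=
  fun p => if p.1 = p.2 then (((Real.sqrt K)⁻¹ : ℝ) : ℂ) else 0

/-- The outer product `|v⟩⟨v|`. -/
def outer {α : Type*} (v : α → ℂ) : Matrix α α ℂ :=
  Matrix.of fun i j => v i * star (v j)

namespace ExactMergingAux

lemma outer_posSemidef {n : Type*} [Fintype n] (v : n → ℂ) :
    (outer v).PosSemidef := by
  rw [Matrix.posSemidef_iff_dotProduct_mulVec]
  constructor
  · ext i j
    simp [outer, Matrix.conjTranspose_apply, mul_comm]
  · intro x
    have h : star x ⬝ᵥ (outer v *ᵥ x)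
        = star (∑ j, star (v j) * x j) * (∑ j, star (v j) * x j) := by
      simp only [outer, Matrix.mulVec, dotProduct, Matrix.of_apply, star_sum,
        star_mul', star_star, Pi.star_apply]
      rw [Finset.sum_mul_sum]
      refine Finset.sum_congr rfl fun i _ => ?_
      rw [Finset.mul_sum]
      refine Finset.sum_congr rfl fun j _ => ?_
      ring
    rw [h]
    exact star_mul_self_nonneg _

section Main

variable {dR dA dB D : ℕ} {e : Fin D → Fin dR → ℂ} {f : Fin D → Fin dA × Fin dB → ℂ}

/-- The state matrix `|S⟩⟨S| ⊗ |Φ_J⟩⟨Φ_J|` with `S = Σ c_l e_l ⊗ f_l`. -/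
def SM (e : Fin D → Fin dR → ℂ) (f : Fin D → Fin dA × Fin dB → ℂ)
    (c : Fin D → ℂ) (J : ℕ) :
    Matrix (Fin dR × ((Fin dA × Fin dB) × (Fin J × Fin J)))
      (Fin dR × ((Fin dA × Fin dB) × (Fin J × Fin J))) ℂ :=
  Matrix.of fun p q =>
    (∑ l, c l * e l p.1 * f l p.2.1) * star (∑ l, c l * e l q.1 * f l q.2.1) *
      (phiP J p.2.2 * star (phiP J q.2.2))

/-- `|f_m⟩⟨f_m'| ⊗ |Φ_J⟩⟨Φ_J|`. -/
def Bm (f : Fin D → Fin dA × Fin dB → ℂ) (m m' : Fin D) (J : ℕ) :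
    Matrix ((Fin dA × Fin dB) × (Fin J × Fin J))
      ((Fin dA × Fin dB) × (Fin J × Fin J)) ℂ :=
  Matrix.of fun p q =>
    f m p.1 * star (f m' q.1) * (phiP J p.2 * star (phiP J q.2))

lemma idTen_eq_iff {J J' : ℕ}
    (M : Matrix ((Fin dA × Fin dB) × (Fin J × Fin J))
        ((Fin dA × Fin dB) × (Fin J × Fin J)) ℂ →
      Matrix ((Fin dA × Fin dB) × (Fin J' × Fin J'))
        ((Fin dA × Fin dB) × (Fin J' × Fin J')) ℂ)
    (ρ : Matrix (Fin dR × ((Fin dA × Fin dB) × (Fin J × Fin J)))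
        (Fin dR × ((Fin dA × Fin dB) × (Fin J × Fin J))) ℂ)
    (σ : Matrix (Fin dR × ((Fin dA × Fin dB) × (Fin J' × Fin J')))
        (Fin dR × ((Fin dA × Fin dB) × (Fin J' × Fin J'))) ℂ) :
    idTen M ρ = σ ↔ ∀ r r' : Fin dR,
      M (Matrix.of fun x y => ρ (r, x) (r', y)) = Matrix.of fun x y => σ (r, x) (r', y) := by
  constructor
  · intro h r r'
    ext a b
    exact congrFun (congrFun h (r, a)) (r', b)
  · intro h
    ext ⟨r, a⟩ ⟨r', b⟩
    exact congrFun (congrFun (h r r') a) b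

lemma key1 (he : ∀ l l', ∑ r, star (e l r) * e l' r = if l = l' then 1 else 0)
    (c : Fin D → ℂ) (m : Fin D) (x : Fin dA × Fin dB) :
    ∑ r, star (c m * e m r) * (∑ l, c l * e l r * f l x)
      = star (c m) * c m * f m x := by
  have h1 : ∀ r, star (c m * e m r) * (∑ l, c l * e l r * f l x)
      = ∑ l, star (e m r) * e l r * (star (c m) * (c l * f l x)) := by
    intro r
    rw [Finset.mul_sum]
    refine Finset.sum_congr rfl fun l _ => ?_
    simp only [star_mul']
    ring
  simp only [h1]
  rw [Finset.sum_comm]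
  have h2 : ∀ l, ∑ r, star (e m r) * e l r * (star (c m) * (c l * f l x))
      = (if m = l then 1 else 0) * (star (c m) * (c l * f l x)) := by
    intro l
    rw [← Finset.sum_mul, he m l]
  simp only [h2, ite_mul, one_mul, zero_mul]
  rw [Finset.sum_ite_eq]
  simp [mul_assoc]

lemma key2 (he : ∀ l l', ∑ r, star (e l r) * e l' r = if l = l' then 1 else 0)
    (c : Fin D → ℂ) (m' : Fin D) (y : Fin dA × Fin dB) :
    ∑ r, (c m' * e m' r) * star (∑ l, c l * e l r * f l y)
      = c m' * star (c m') * star (f m' y) := by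
  have h1 : ∀ r, (c m' * e m' r) * star (∑ l, c l * e l r * f l y)
      = ∑ l, star (e l r) * e m' r * (c m' * (star (c l) * star (f l y))) := by
    intro r
    rw [star_sum, Finset.mul_sum]
    refine Finset.sum_congr rfl fun l _ => ?_
    simp only [star_mul']
    ring
  simp only [h1]
  rw [Finset.sum_comm]
  have h2 : ∀ l, ∑ r, star (e l r) * e m' r * (c m' * (star (c l) * star (f l y)))
      = (if l = m' then 1 else 0) * (c m' * (star (c l) * star (f l y))) := by
    intro l
    rw [← Finset.sum_mul, he l m']
  simp only [h2, ite_mul, one_mul, zero_mul]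
  rw [Finset.sum_ite_eq']
  simp [mul_assoc]

lemma blk_expand (c : Fin D → ℂ) (J : ℕ) (r r' : Fin dR) :
    (Matrix.of fun x y => SM e f c J (r, x) (r', y))
      = ∑ m, ∑ m', (c m * e m r * star (c m' * e m' r')) • Bm f m m' J := by
  ext x y
  simp only [Matrix.sum_apply, Matrix.smul_apply, smul_eq_mul, Matrix.of_apply, SM, Bm]
  rw [star_sum, Finset.sum_mul_sum, Finset.sum_mul]
  refine Finset.sum_congr rfl fun m _ => ?_
  rw [Finset.sum_mul]
  refine Finset.sum_congr rfl fun m' _ => ?_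
  simp only [star_mul']
  ring

lemma collapse (he : ∀ l l', ∑ r, star (e l r) * e l' r = if l = l' then 1 else 0)
    (c : Fin D → ℂ) (J : ℕ) (m m' : Fin D) :
    ∑ r, ∑ r', (star (c m * e m r) * (c m' * e m' r')) •
        (Matrix.of fun x y => SM e f c J (r, x) (r', y))
      = ((star (c m) * c m) * (c m' * star (c m'))) • Bm f m m' J := by
  ext a b
  simp only [Matrix.sum_apply, Matrix.smul_apply, smul_eq_mul, Matrix.of_apply, SM, Bm]
  calc
    ∑ r, ∑ r', (star (c m * e m r) * (c m' * e m' r')) *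
        ((∑ l, c l * e l r * f l a.1) * star (∑ l, c l * e l r' * f l b.1) *
          (phiP J a.2 * star (phiP J b.2)))
      = ∑ r, ∑ r',
          (star (c m * e m r) * (∑ l, c l * e l r * f l a.1)) *
            ((c m' * e m' r') * star (∑ l, c l * e l r' * f l b.1)) *
              (phiP J a.2 * star (phiP J b.2)) := by
        refine Finset.sum_congr rfl fun r _ => Finset.sum_congr rfl fun r' _ => ?_
        ring
    _ = (∑ r, star (c m * e m r) * (∑ l, c l * e l r * f l a.1)) *
          (∑ r', (c m' * e m' r') * star (∑ l, c l * e l r' * f l b.1)) *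
            (phiP J a.2 * star (phiP J b.2)) := by
        rw [Finset.sum_mul_sum]
        simp only [Finset.sum_mul]
    _ = (star (c m) * c m * f m a.1) * (c m' * star (c m') * star (f m' b.1)) *
          (phiP J a.2 * star (phiP J b.2)) := by
        rw [key1 he, key2 he]
    _ = ((star (c m) * c m) * (c m' * star (c m'))) *
          (f m a.1 * star (f m' b.1) * (phiP J a.2 * star (phiP J b.2))) := by ring

variable {K L : ℕ}
  (M : Matrix ((Fin dA × Fin dB) × (Fin K × Fin K))
         ((Fin dA × Fin dB) × (Fin K × Fin K)) ℂ →ₗ[ℂ]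
       Matrix ((Fin dA × Fin dB) × (Fin L × Fin L))
         ((Fin dA × Fin dB) × (Fin L × Fin L)) ℂ)

lemma gen (he : ∀ l l', ∑ r, star (e l r) * e l' r = if l = l' then 1 else 0)
    (c : Fin D → ℂ) (hc : ∀ l, c l ≠ 0) :
    idTen (⇑M) (SM e f c K) = SM e f c L
      ↔ ∀ m m', M (Bm f m m' K) = Bm f m m' L := by
  rw [idTen_eq_iff]
  constructor
  · intro h m m'
    have step : M (∑ r, ∑ r', (star (c m * e m r) * (c m' * e m' r')) •
          (Matrix.of fun x y => SM e f c K (r, x) (r', y)))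
        = ∑ r, ∑ r', (star (c m * e m r) * (c m' * e m' r')) •
          (Matrix.of fun x y => SM e f c L (r, x) (r', y)) := by
      rw [map_sum]
      refine Finset.sum_congr rfl fun r _ => ?_
      rw [map_sum]
      refine Finset.sum_congr rfl fun r' _ => ?_
      rw [LinearMap.map_smul, h r r']
    rw [collapse he c K m m', collapse he c L m m', LinearMap.map_smul] at step
    have hne : (star (c m) * c m) * (c m' * star (c m')) ≠ 0 := by
      refine mul_ne_zero (mul_ne_zero ?_ (hc m)) (mul_ne_zero (hc m') ?_)
      · exact star_ne_zero.mpr (hc m)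
      · exact star_ne_zero.mpr (hc m')
    exact smul_right_injective _ hne step
  · intro h r r'
    rw [blk_expand, blk_expand, map_sum]
    refine Finset.sum_congr rfl fun m _ => ?_
    rw [map_sum]
    refine Finset.sum_congr rfl fun m' _ => ?_
    rw [LinearMap.map_smul, h m m']

/-- The bipartite state with coefficients `α`. -/
def Rho (f : Fin D → Fin dA × Fin dB → ℂ) (α : Fin D → Fin D → ℂ) :
    Matrix (Fin dA × Fin dB) (Fin dA × Fin dB) ℂ :=
  Matrix.of fun x y => ∑ l, ∑ l', α l l' * f l x * star (f l' y)

lemma kron_expand (α : Fin D → Fin D → ℂ) (J : ℕ) :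
    Rho f α ⊗ₖ outer (phiP J) = ∑ l, ∑ l', α l l' • Bm f l l' J := by
  ext a b
  simp only [Matrix.kroneckerMap_apply, Rho, outer, Bm, Matrix.of_apply, Matrix.sum_apply,
    Matrix.smul_apply, smul_eq_mul]
  rw [Finset.sum_mul]
  refine Finset.sum_congr rfl fun l _ => ?_
  rw [Finset.sum_mul]
  refine Finset.sum_congr rfl fun l' _ => ?_
  ring

lemma rho_outer (cc : Fin D → ℂ) :
    Rho f (fun l l' => cc l * star (cc l')) = outer (fun x => ∑ l, cc l * f l x) := by
  ext x y
  simp only [Rho, outer, Matrix.of_apply]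
  rw [star_sum, Finset.sum_mul_sum]
  refine Finset.sum_congr rfl fun l _ => Finset.sum_congr rfl fun l' _ => ?_
  simp only [star_mul']
  ring

lemma rho_trace (hf : ∀ l l', ∑ x, star (f l x) * f l' x = if l = l' then 1 else 0)
    (α : Fin D → Fin D → ℂ) :
    (Rho f α).trace = ∑ l, α l l := by
  have hfs : ∀ l l', ∑ x, f l x * star (f l' x) = if l = l' then (1 : ℂ) else 0 := by
    intro l l'
    have h := congrArg star (hf l l')
    simpa [star_sum, star_mul', star_star, apply_ite] using h
  simp only [Matrix.trace, Matrix.diag, Rho, Matrix.of_apply]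
  rw [Finset.sum_comm]
  refine Finset.sum_congr rfl fun l _ => ?_
  rw [Finset.sum_comm]
  have : ∀ l', ∑ x, α l l' * f l x * star (f l' x) = α l l' * (if l = l' then 1 else 0) := by
    intro l'
    simp only [mul_assoc]
    rw [← Finset.mul_sum, hfs l l']
  simp only [this, mul_ite, mul_one, mul_zero]
  rw [Finset.sum_ite_eq]
  simp


/-- The coefficient vectors for the polarization argument. -/
def ccu (m m' : Fin D) (u : ℂ) : Fin D → ℂ := fun l =>
  if l = m then (((Real.sqrt 2)⁻¹ : ℝ) : ℂ)
  else if l = m' then u * (((Real.sqrt 2)⁻¹ : ℝ) : ℂ) else 0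

lemma hs2 : (((Real.sqrt 2)⁻¹ : ℝ) : ℂ) * (((Real.sqrt 2)⁻¹ : ℝ) : ℂ) = 1 / 2 := by
  rw [← Complex.ofReal_mul, ← mul_inv, Real.mul_self_sqrt (by norm_num)]
  norm_num

lemma star_s : star (((Real.sqrt 2)⁻¹ : ℝ) : ℂ) = (((Real.sqrt 2)⁻¹ : ℝ) : ℂ) := by
  simp [Complex.star_def, Complex.conj_ofReal]

lemma sum_two {m m' : Fin D} (hmm : m ≠ m') (u : ℂ) (g : Fin D → ℂ) :
    ∑ l, ccu m m' u l * g l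
      = (((Real.sqrt 2)⁻¹ : ℝ) : ℂ) * g m + u * (((Real.sqrt 2)⁻¹ : ℝ) : ℂ) * g m' := by
  have h : ∀ l, ccu m m' u l * g l
      = (if l = m then (((Real.sqrt 2)⁻¹ : ℝ) : ℂ) * g l else 0)
        + (if l = m' then u * (((Real.sqrt 2)⁻¹ : ℝ) : ℂ) * g l else 0) := by
    intro l
    by_cases h1 : l = m
    · subst h1
      simp [ccu, hmm]
    · by_cases h2 : l = m'
      · subst h2
        simp [ccu, h1]
      · simp [ccu, h1, h2]
  rw [Finset.sum_congr rfl fun l _ => h l, Finset.sum_add_distrib]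
  simp [Finset.sum_ite_eq']

lemma kron_single (m : Fin D) (J : ℕ) :
    Rho f (fun l l' => (if l = m then (1 : ℂ) else 0) * star (if l' = m then (1 : ℂ) else 0))
        ⊗ₖ outer (phiP J) = Bm f m m J := by
  rw [kron_expand]
  simp [apply_ite (star : ℂ → ℂ), ite_mul, one_mul, zero_mul, ite_smul, zero_smul,
    Finset.sum_ite_eq']

lemma kron_ovr (v w : Fin dA × Fin dB → ℂ) (m m' : Fin D) (J : ℕ)
    (hv : v = f m) (hw : w = f m') :
    (Matrix.of fun x y => v x * star (w y)) ⊗ₖ outer (phiP J) = Bm f m m' J := by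
  subst hv hw
  ext a b
  simp [Bm, outer, Matrix.kroneckerMap_apply]

lemma comb {m m' : Fin D} (hmm : m ≠ m') :
    (Matrix.of fun x y : Fin dA × Fin dB => f m x * star (f m' y))
      = (1 / 2 : ℂ) • Rho f (fun l l' => ccu m m' 1 l * star (ccu m m' 1 l'))
        + (-(1 / 2) : ℂ) • Rho f (fun l l' => ccu m m' (-1) l * star (ccu m m' (-1) l'))
        + (Complex.I / 2) • Rho f (fun l l' => ccu m m' Complex.I l * star (ccu m m' Complex.I l'))
        + (-(Complex.I / 2)) •
            Rho f (fun l l' => ccu m m' (-Complex.I) l * star (ccu m m' (-Complex.I) l')) := by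
  ext x y
  have hw : ∀ u : ℂ, Rho f (fun l l' => ccu m m' u l * star (ccu m m' u l')) x y
      = ((((Real.sqrt 2)⁻¹ : ℝ) : ℂ) * f m x + u * (((Real.sqrt 2)⁻¹ : ℝ) : ℂ) * f m' x)
        * star ((((Real.sqrt 2)⁻¹ : ℝ) : ℂ) * f m y + u * (((Real.sqrt 2)⁻¹ : ℝ) : ℂ) * f m' y) := by
    intro u
    rw [rho_outer]
    show (∑ l, ccu m m' u l * f l x) * star (∑ l, ccu m m' u l * f l y) = _
    rw [sum_two hmm u (fun l => f l x), sum_two hmm u (fun l => f l y)]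
  simp only [Matrix.add_apply, Matrix.smul_apply, smul_eq_mul, Matrix.of_apply, hw]
  simp only [star_add, star_mul', star_s, star_one, star_neg, Complex.star_def, Complex.conj_I]
  linear_combination (-2 * f m x * (starRingEnd ℂ) (f m' y)) * hs2
    + ((((Real.sqrt 2)⁻¹ : ℝ) : ℂ) * (((Real.sqrt 2)⁻¹ : ℝ) : ℂ) *
        (f m x * (starRingEnd ℂ) (f m' y) - f m' x * (starRingEnd ℂ) (f m y))) * Complex.I_mul_I

lemma P_iff_three
    (he : ∀ l l', ∑ r, star (e l r) * e l' r = if l = l' then 1 else 0)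
    (hf : ∀ l l', ∑ x, star (f l x) * f l' x = if l = l' then 1 else 0) :
    (∀ m m', M (Bm f m m' K) = Bm f m m' L)
      ↔ (∀ α : Fin D → Fin D → ℂ, (Rho f α).PosSemidef → (Rho f α).trace = 1 →
          M (Rho f α ⊗ₖ outer (phiP K)) = Rho f α ⊗ₖ outer (phiP L)) := by
  constructor
  · intro h α _ _
    rw [kron_expand, kron_expand, map_sum]
    refine Finset.sum_congr rfl fun l _ => ?_
    rw [map_sum]
    refine Finset.sum_congr rfl fun l' _ => ?_
    rw [LinearMap.map_smul, h l l']
  · intro h3 m m'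
    by_cases hmm : m = m'
    · subst hmm
      have hpsd : (Rho f (fun l l' =>
          (if l = m then (1 : ℂ) else 0) * star (if l' = m then (1 : ℂ) else 0))).PosSemidef := by
        rw [rho_outer]
        exact outer_posSemidef _
      have htr : (Rho f (fun l l' =>
          (if l = m then (1 : ℂ) else 0) * star (if l' = m then (1 : ℂ) else 0))).trace = 1 := by
        rw [rho_trace hf]
        simp [apply_ite (star : ℂ → ℂ), ite_mul, Finset.sum_ite_eq']
      have := h3 _ hpsd htr
      rwa [kron_single m K, kron_single m L] at this
    · have hpsd : ∀ u : ℂ,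
          (Rho f (fun l l' => ccu m m' u l * star (ccu m m' u l'))).PosSemidef := by
        intro u
        rw [rho_outer]
        exact outer_posSemidef _
      have htr : ∀ u : ℂ, u * star u = 1 →
          (Rho f (fun l l' => ccu m m' u l * star (ccu m m' u l'))).trace = 1 := by
        intro u hu
        rw [rho_trace hf]
        rw [sum_two hmm u (fun l => star (ccu m m' u l))]
        have h1 : ccu m m' u m = (((Real.sqrt 2)⁻¹ : ℝ) : ℂ) := by simp [ccu]
        have h2 : ccu m m' u m' = u * (((Real.sqrt 2)⁻¹ : ℝ) : ℂ) := by
          simp [ccu, Ne.symm hmm]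
        rw [h1, h2]
        simp only [star_mul', star_s]
        linear_combination 2 * hs2 + ((((Real.sqrt 2)⁻¹ : ℝ) : ℂ) * (((Real.sqrt 2)⁻¹ : ℝ) : ℂ)) * hu
      have R : ∀ u : ℂ, u * star u = 1 →
          M (Rho f (fun l l' => ccu m m' u l * star (ccu m m' u l')) ⊗ₖ outer (phiP K))
            = Rho f (fun l l' => ccu m m' u l * star (ccu m m' u l')) ⊗ₖ outer (phiP L) :=
        fun u hu => h3 _ (hpsd u) (htr u hu)
      have hu1 : (1 : ℂ) * star 1 = 1 := by simp
      have hu2 : (-1 : ℂ) * star (-1) = 1 := by simp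
      have hu3 : Complex.I * star Complex.I = 1 := by
        simp [Complex.star_def, Complex.conj_I, Complex.I_mul_I]
      have hu4 : (-Complex.I) * star (-Complex.I) = 1 := by
        simp [Complex.star_def, Complex.conj_I, Complex.I_mul_I]
      have hBm : ∀ J : ℕ, Bm f m m' J
          = (1 / 2 : ℂ) • (Rho f (fun l l' => ccu m m' 1 l * star (ccu m m' 1 l')) ⊗ₖ outer (phiP J))
            + (-(1 / 2) : ℂ) • (Rho f (fun l l' => ccu m m' (-1) l * star (ccu m m' (-1) l')) ⊗ₖ outer (phiP J))
            + (Complex.I / 2) • (Rho f (fun l l' => ccu m m' Complex.I l * star (ccu m m' Complex.I l')) ⊗ₖ outer (phiP J))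
            + (-(Complex.I / 2)) • (Rho f (fun l l' => ccu m m' (-Complex.I) l * star (ccu m m' (-Complex.I) l')) ⊗ₖ outer (phiP J)) := by
        intro J
        rw [← kron_ovr (f m) (f m') m m' J rfl rfl, comb hmm]
        rw [Matrix.add_kronecker, Matrix.add_kronecker, Matrix.add_kronecker,
          Matrix.smul_kronecker, Matrix.smul_kronecker, Matrix.smul_kronecker,
          Matrix.smul_kronecker]
      rw [hBm K, hBm L, map_add, map_add, map_add, LinearMap.map_smul, LinearMap.map_smul,
        LinearMap.map_smul, LinearMap.map_smul, R 1 hu1, R (-1) hu2, R Complex.I hu3,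
        R (-Complex.I) hu4]

end Main

end ExactMergingAux

theorem exact_merging_equivalent_tasks
    (dR dA dB K L D : ℕ)
    (lam : Fin D → ℝ) (hlam : ∀ l, 0 < lam l)
    (e : Fin D → Fin dR → ℂ)
    (he : ∀ l l', ∑ r, star (e l r) * e l' r = if l = l' then 1 else 0)
    (f : Fin D → Fin dA × Fin dB → ℂ)
    (hf : ∀ l l', ∑ x, star (f l x) * f l' x = if l = l' then 1 else 0)
    (ψ : Fin dR × (Fin dA × Fin dB) → ℂ)
    (hψ : ψ = fun p => ∑ l, (Real.sqrt (lam l) : ℂ) * e l p.1 * f l p.2)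
    (M : Matrix ((Fin dA × Fin dB) × (Fin K × Fin K))
               ((Fin dA × Fin dB) × (Fin K × Fin K)) ℂ →ₗ[ℂ]
         Matrix ((Fin dA × Fin dB) × (Fin L × Fin L))
               ((Fin dA × Fin dB) × (Fin L × Fin L)) ℂ) :
    ((idTen (⇑M) (Matrix.of fun p q =>
          ψ (p.1, p.2.1) * star (ψ (q.1, q.2.1)) *
            (phiP K p.2.2 * star (phiP K q.2.2)))
        = Matrix.of fun p q =>
            ψ (p.1, p.2.1) * star (ψ (q.1, q.2.1)) *
              (phiP L p.2.2 * star (phiP L q.2.2)))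
      ↔ (idTen (⇑M) (Matrix.of fun p q =>
            (∑ l, (((Real.sqrt D)⁻¹ : ℝ) : ℂ) * e l p.1 * f l p.2.1) *
              star (∑ l, (((Real.sqrt D)⁻¹ : ℝ) : ℂ) * e l q.1 * f l q.2.1) *
                (phiP K p.2.2 * star (phiP K q.2.2)))
          = Matrix.of fun p q =>
              (∑ l, (((Real.sqrt D)⁻¹ : ℝ) : ℂ) * e l p.1 * f l p.2.1) *
                star (∑ l, (((Real.sqrt D)⁻¹ : ℝ) : ℂ) * e l q.1 * f l q.2.1) *
                  (phiP L p.2.2 * star (phiP L q.2.2)))) ∧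
    ((idTen (⇑M) (Matrix.of fun p q =>
          ψ (p.1, p.2.1) * star (ψ (q.1, q.2.1)) *
            (phiP K p.2.2 * star (phiP K q.2.2)))
        = Matrix.of fun p q =>
            ψ (p.1, p.2.1) * star (ψ (q.1, q.2.1)) *
              (phiP L p.2.2 * star (phiP L q.2.2)))
      ↔ (∀ α : Fin D → Fin D → ℂ,
          (Matrix.of fun x y : Fin dA × Fin dB =>
              ∑ l, ∑ l', α l l' * f l x * star (f l' y)).PosSemidef →
          (Matrix.of fun x y : Fin dA × Fin dB =>
              ∑ l, ∑ l', α l l' * f l x * star (f l' y)).trace = 1 →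
          M ((Matrix.of fun x y : Fin dA × Fin dB =>
                ∑ l, ∑ l', α l l' * f l x * star (f l' y)) ⊗ₖ outer (phiP K))
            = (Matrix.of fun x y : Fin dA × Fin dB =>
                ∑ l, ∑ l', α l l' * f l x * star (f l' y)) ⊗ₖ outer (phiP L))) := by
  subst hψ
  have hc1 : ∀ l : Fin D, ((Real.sqrt (lam l) : ℝ) : ℂ) ≠ 0 := fun l =>
    Complex.ofReal_ne_zero.mpr (ne_of_gt (Real.sqrt_pos.mpr (hlam l)))
  have hc2 : ∀ l : Fin D, (fun _ : Fin D => (((Real.sqrt D)⁻¹ : ℝ) : ℂ)) l ≠ 0 := by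
    intro l
    have hD : (0 : ℝ) < D := by exact_mod_cast l.pos
    exact Complex.ofReal_ne_zero.mpr (inv_ne_zero (ne_of_gt (Real.sqrt_pos.mpr hD)))
  have hgen1 := ExactMergingAux.gen (f := f) M he (fun l => ((Real.sqrt (lam l) : ℝ) : ℂ)) hc1
  have hgen2 := ExactMergingAux.gen (f := f) M he (fun _ => (((Real.sqrt D)⁻¹ : ℝ) : ℂ)) hc2
  have h3 := ExactMergingAux.P_iff_three M he hf
  exact ⟨hgen1.trans hgen2.symm, hgen1.trans h3⟩

end
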